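/- arXiv:2008.04613 — 3 statements merged into one kernel-verified Lean document; each statement's English description precedes it below -/
import Mathlib

section
/- For every matrix game Z ∈ ℝ^{l×m} (with l, m ≥ 1) there exist v* ∈ ℝ, a mixed strategy x* ∈ Δ_l for player 1 and a mixed strategy y* ∈ Δ_m for player 2 such that: (i) x*ᵀZ y ≥ v* for every y ∈ Δ_m, i.e., under x* player 1's expected utility is at least v* regardless of player 2's strategy; and (ii) xᵀZ y* ≤ v* for every x ∈ Δ_l, i.e., under y* player 2's expected utility −xᵀZ y* is at least −v* regardless of player 1's strategy. (Minimax theorem; v* is called the value of the game.) -/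
open Finset

/-- Expected utility of player 1 in the matrix game `Z` under mixed strategies `x` and `y`:
`xᵀ Z y = ∑_{i,j} x_i z_{ij} y_j`. -/
def matPayoff {l m : ℕ} (Z : Matrix (Fin l) (Fin m) ℝ)
    (x : Fin l → ℝ) (y : Fin m → ℝ) : ℝ :=
  ∑ i, ∑ j, x i * Z i j * y j

/-- Theorem of the alternative for matrix games. -/
lemma minimax_alternative (l m : ℕ) (hl : 1 ≤ l) (hm : 1 ≤ m)
    (Z : Matrix (Fin l) (Fin m) ℝ) :
    (∃ y ∈ stdSimplex ℝ (Fin m), ∀ i, ∑ j, Z i j * y j ≤ 0) ∨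
    (∃ x ∈ stdSimplex ℝ (Fin l), ∀ j, 0 < ∑ i, x i * Z i j) := by
  classical
  set g : Fin l ⊕ Fin m → (Fin l → ℝ) :=
    Sum.elim (fun i => fun i' => if i = i' then (1:ℝ) else 0) (fun j => fun i => Z i j) with hg
  set C : Set (Fin l → ℝ) := convexHull ℝ (Set.range g) with hC
  by_cases h0 : (0 : Fin l → ℝ) ∈ C
  · -- case (a)
    left
    obtain ⟨ι, _, w, z, hw0, hw1, hz, hzero⟩ :=
      mem_convexHull_iff_exists_fintype.1 h0
    choose c hc using fun i => hz i
    set W : Fin l ⊕ Fin m → ℝ := fun k => ∑ i ∈ univ.filter (fun i => c i = k), w i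
      with hW
    have hW0 : ∀ k, 0 ≤ W k := fun k => Finset.sum_nonneg fun i _ => hw0 i
    have hW1 : ∑ k, W k = 1 := by
      rw [hW, ← hw1]
      exact Finset.sum_fiberwise _ _ _
    have hWsum : ∑ k, W k • g k = 0 := by
      rw [hW, ← hzero]
      calc ∑ k, (∑ i ∈ univ.filter (fun i => c i = k), w i) • g k
          = ∑ k, ∑ i ∈ univ.filter (fun i => c i = k), w i • g k := by
            refine Finset.sum_congr rfl fun k _ => ?_
            rw [Finset.sum_smul]
        _ = ∑ k, ∑ i ∈ univ.filter (fun i => c i = k), w i • z i := by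
            refine Finset.sum_congr rfl fun k _ => Finset.sum_congr rfl fun i hi => ?_
            rw [Finset.mem_filter] at hi
            rw [← hi.2, hc]
        _ = ∑ i, w i • z i := Finset.sum_fiberwise _ _ _
    -- coordinatewise equation
    have key : ∀ i : Fin l, W (Sum.inl i) + ∑ j, W (Sum.inr j) * Z i j = 0 := by
      intro i
      have := congrFun hWsum i
      simpa [g, Fintype.sum_sum_type, mul_comm] using this
    set s : ℝ := ∑ j, W (Sum.inr j) with hs
    have hs0 : 0 ≤ s := Finset.sum_nonneg fun j _ => hW0 _
    have hspos : 0 < s := by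
      rcases lt_or_eq_of_le hs0 with h | h
      · exact h
      · exfalso
        have hj0 : ∀ j, W (Sum.inr j) = 0 := by
          intro j
          have := Finset.sum_eq_zero_iff_of_nonneg (fun j _ => hW0 (Sum.inr j)) |>.1 h.symm
          exact this j (Finset.mem_univ j)
        have hi0 : ∀ i, W (Sum.inl i) = 0 := by
          intro i
          have := key i
          simpa [hj0] using this
        have : (1 : ℝ) = 0 := by
          rw [← hW1, Fintype.sum_sum_type]
          simp [hi0, hj0]
        norm_num at this
    refine ⟨fun j => W (Sum.inr j) / s, ⟨fun j => div_nonneg (hW0 _) hs0, ?_⟩, ?_⟩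
    · rw [← Finset.sum_div, ← hs, div_self hspos.ne']
    · intro i
      have hk := key i
      have : ∑ j, Z i j * (W (Sum.inr j) / s) = (∑ j, W (Sum.inr j) * Z i j) / s := by
        rw [Finset.sum_div]
        exact Finset.sum_congr rfl fun j _ => by ring
      rw [this]
      apply div_nonpos_of_nonpos_of_nonneg _ hs0
      linarith [hW0 (Sum.inl i)]
  · -- case (b): separate 0 from C
    right
    have hCconv : Convex ℝ C := convex_convexHull ℝ _
    have hCclosed : IsClosed C := (Set.finite_range g).isClosed_convexHull (𝕜 := ℝ)
    obtain ⟨f, u, hfu, hub⟩ := geometric_hahn_banach_point_closed hCconv hCclosed h0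
    have hu : 0 < u := by simpa using hfu
    have hpos : ∀ b ∈ Set.range g, 0 < f b := fun b hb =>
      hu.trans (hub b (subset_convexHull ℝ _ hb))
    set x : Fin l → ℝ := fun i => f (fun i' => if i = i' then (1:ℝ) else 0) with hx
    have hxpos : ∀ i, 0 < x i := fun i => hpos _ ⟨Sum.inl i, rfl⟩
    have hcolpos : ∀ j, 0 < ∑ i, x i * Z i j := by
      intro j
      have hb : (fun i => Z i j) ∈ Set.range g := ⟨Sum.inr j, rfl⟩
      have hfb : 0 < f (fun i => Z i j) := hpos _ hb
      have hrepr : (fun i => Z i j) =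
          ∑ i, Z i j • (fun i' => if i = i' then (1:ℝ) else 0) := by
        simpa using pi_eq_sum_univ (fun i => Z i j)
      rw [hrepr, map_sum] at hfb
      calc (0:ℝ) < ∑ i, f (Z i j • (fun i' => if i = i' then (1:ℝ) else 0)) := hfb
        _ = ∑ i, x i * Z i j := by
            refine Finset.sum_congr rfl fun i _ => ?_
            rw [map_smul]
            simp [hx, mul_comm]
    set s : ℝ := ∑ i, x i with hs
    have hspos : 0 < s := by
      have : Nonempty (Fin l) := ⟨⟨0, hl⟩⟩
      exact Finset.sum_pos (fun i _ => hxpos i) Finset.univ_nonempty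
    refine ⟨fun i => x i / s, ⟨fun i => div_nonneg (hxpos i).le hspos.le, ?_⟩, ?_⟩
    · rw [← Finset.sum_div, ← hs, div_self hspos.ne']
    · intro j
      have : ∑ i, x i / s * Z i j = (∑ i, x i * Z i j) / s := by
        rw [Finset.sum_div]
        exact Finset.sum_congr rfl fun i _ => by ring
      rw [this]
      exact div_pos (hcolpos j) hspos

/-- Minimax theorem: every matrix game has a value `v⋆` together with optimal
mixed strategies `x⋆` for player 1 and `y⋆` for player 2. -/
theorem minimax_theorem (l m : ℕ) (hl : 1 ≤ l) (hm : 1 ≤ m)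
    (Z : Matrix (Fin l) (Fin m) ℝ) :
    ∃ (v : ℝ) (xs : Fin l → ℝ) (ys : Fin m → ℝ),
      xs ∈ stdSimplex ℝ (Fin l) ∧ ys ∈ stdSimplex ℝ (Fin m) ∧
      (∀ y ∈ stdSimplex ℝ (Fin m), v ≤ matPayoff Z xs y) ∧
      (∀ x ∈ stdSimplex ℝ (Fin l), matPayoff Z x ys ≤ v) := by
  classical
  haveI : Nonempty (Fin l) := ⟨⟨0, hl⟩⟩
  haveI : Nonempty (Fin m) := ⟨⟨0, hm⟩⟩
  have hne_l : (Finset.univ : Finset (Fin l)).Nonempty := Finset.univ_nonempty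
  have hne_m : (Finset.univ : Finset (Fin m)).Nonempty := Finset.univ_nonempty
  -- F x = min over columns; G y = max over rows
  set F : (Fin l → ℝ) → ℝ := fun x => univ.inf' hne_m (fun j => ∑ i, x i * Z i j) with hF
  set G : (Fin m → ℝ) → ℝ := fun y => univ.sup' hne_l (fun i => ∑ j, Z i j * y j) with hG
  have hFcont : Continuous F := by
    apply Continuous.finset_inf'_apply
    intro j _
    exact continuous_finset_sum _ fun i _ => (continuous_apply i).mul continuous_const
  have hGcont : Continuous G := by
    apply Continuous.finset_sup'_apply
    intro i _
    exact continuous_finset_sum _ fun j _ => continuous_const.mul (continuous_apply j)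
  have hSl : (stdSimplex ℝ (Fin l)).Nonempty := ⟨_, single_mem_stdSimplex ℝ (⟨0, hl⟩ : Fin l)⟩
  have hSm : (stdSimplex ℝ (Fin m)).Nonempty := ⟨_, single_mem_stdSimplex ℝ (⟨0, hm⟩ : Fin m)⟩
  obtain ⟨xs, hxsS, hxsmax⟩ :=
    (isCompact_stdSimplex ℝ (Fin l)).exists_isMaxOn hSl hFcont.continuousOn
  obtain ⟨ys, hysS, hysmin⟩ :=
    (isCompact_stdSimplex ℝ (Fin m)).exists_isMinOn hSm hGcont.continuousOn
  set v1 : ℝ := F xs with hv1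
  set v2 : ℝ := G ys with hv2
  -- key inequality : v2 ≤ v1
  have hkey : v2 ≤ v1 := by
    by_contra hlt
    push_neg at hlt
    obtain ⟨t, ht1, ht2⟩ : ∃ t, v1 < t ∧ t < v2 :=
      ⟨(v1 + v2) / 2, by linarith, by linarith⟩
    rcases minimax_alternative l m hl hm (fun i j => Z i j - t) with
      ⟨y, hyS, hy⟩ | ⟨x, hxS, hx⟩
    · -- player 2 guarantees ≤ t : contradicts minimality v2
      have hGy : G y ≤ t := by
        rw [hG]
        apply Finset.sup'_le
        intro i _
        have := hy i
        have hsum : ∑ j, (Z i j - t) * y j = (∑ j, Z i j * y j) - t := by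
          have h1 : ∑ j, (Z i j - t) * y j = ∑ j, (Z i j * y j - t * y j) :=
            Finset.sum_congr rfl fun j _ => by ring
          rw [h1, Finset.sum_sub_distrib, ← Finset.mul_sum, hyS.2, mul_one]
        linarith [hsum ▸ this]
      have := hysmin hyS
      simp only [Set.mem_setOf_eq] at this
      have : v2 ≤ G y := this
      linarith
    · -- player 1 guarantees > t : contradicts maximality v1
      have hFx : t ≤ F x := by
        rw [hF]
        apply Finset.le_inf'
        intro j _
        have := hx j
        have hsum : ∑ i, x i * (Z i j - t) = (∑ i, x i * Z i j) - t := by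
          have h1 : ∑ i, x i * (Z i j - t) = ∑ i, (x i * Z i j - x i * t) :=
            Finset.sum_congr rfl fun i _ => by ring
          rw [h1, Finset.sum_sub_distrib, ← Finset.sum_mul, hxS.2, one_mul]
        linarith [hsum ▸ this]
      have := hxsmax hxS
      simp only [Set.mem_setOf_eq] at this
      have : F x ≤ v1 := this
      linarith
  refine ⟨v1, xs, ys, hxsS, hysS, ?_, ?_⟩
  · intro y hyS
    have hcol : ∀ j, v1 ≤ ∑ i, xs i * Z i j := fun j =>
      Finset.inf'_le (fun j => ∑ i, xs i * Z i j) (Finset.mem_univ j)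
    have : matPayoff Z xs y = ∑ j, (∑ i, xs i * Z i j) * y j := by
      rw [matPayoff, Finset.sum_comm]
      exact Finset.sum_congr rfl fun j _ => by rw [Finset.sum_mul]
    rw [this]
    calc v1 = ∑ j, v1 * y j := by rw [← Finset.mul_sum, hyS.2, mul_one]
      _ ≤ ∑ j, (∑ i, xs i * Z i j) * y j :=
        Finset.sum_le_sum fun j _ => mul_le_mul_of_nonneg_right (hcol j) (hyS.1 j)
  · intro x hxS
    have hrow : ∀ i, ∑ j, Z i j * ys j ≤ v2 := fun i =>
      Finset.le_sup' (fun i => ∑ j, Z i j * ys j) (Finset.mem_univ i)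
    have : matPayoff Z x ys = ∑ i, x i * (∑ j, Z i j * ys j) := by
      rw [matPayoff]
      exact Finset.sum_congr rfl fun i _ => by
        rw [Finset.mul_sum]
        exact Finset.sum_congr rfl fun j _ => by ring
    rw [this]
    calc ∑ i, x i * (∑ j, Z i j * ys j) ≤ ∑ i, x i * v2 :=
          Finset.sum_le_sum fun i _ => mul_le_mul_of_nonneg_left (hrow i) (hxS.1 i)
      _ = v2 := by rw [← Finset.sum_mul, hxS.2, one_mul]
      _ ≤ v1 := hkey
end

section
/- For every matrix game Z ∈ ℝ^{l×m} (with l, m ≥ 1), the game is determined: sup_{x∈Δ_l} inf_{y∈Δ_m} xᵀZy = inf_{y∈Δ_m} sup_{x∈Δ_l} xᵀZy, and moreover all four extrema are attained, so max_{x∈Δ_l} min_{y∈Δ_m} xᵀZy = min_{y∈Δ_m} max_{x∈Δ_l} xᵀZy. -/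
open Finset

namespace MatGameAux

variable {l m : ℕ} (Z : Matrix (Fin l) (Fin m) ℝ)

lemma payoff_eq_col (x : Fin l → ℝ) (y : Fin m → ℝ) :
    matPayoff Z x y = ∑ j, (∑ i, x i * Z i j) * y j := by
  unfold matPayoff
  rw [Finset.sum_comm]
  exact Finset.sum_congr rfl fun j _ => by rw [Finset.sum_mul]

lemma payoff_eq_row (x : Fin l → ℝ) (y : Fin m → ℝ) :
    matPayoff Z x y = ∑ i, x i * (∑ j, Z i j * y j) := by
  unfold matPayoff
  refine Finset.sum_congr rfl fun i _ => ?_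
  rw [Finset.mul_sum]
  exact Finset.sum_congr rfl fun j _ => by ring

/-- the pure-strategy evaluation of a mixed strategy of player 1 -/
noncomputable def Fv [Nonempty (Fin m)] (x : Fin l → ℝ) : ℝ :=
  univ.inf' univ_nonempty fun j => ∑ i, x i * Z i j

/-- the pure-strategy evaluation of a mixed strategy of player 2 -/
noncomputable def Gv [Nonempty (Fin l)] (y : Fin m → ℝ) : ℝ :=
  univ.sup' univ_nonempty fun i => ∑ j, Z i j * y j

lemma isLeast_payoff [Nonempty (Fin m)] {x : Fin l → ℝ} (hx : x ∈ stdSimplex ℝ (Fin l)) :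
    IsLeast {u : ℝ | ∃ y ∈ stdSimplex ℝ (Fin m), u = matPayoff Z x y} (Fv Z x) := by
  constructor
  · obtain ⟨j₀, -, hj₀⟩ := Finset.exists_mem_eq_inf' (univ_nonempty (α := Fin m))
      (fun j => ∑ i, x i * Z i j)
    refine ⟨Pi.single j₀ 1, single_mem_stdSimplex ℝ j₀, ?_⟩
    rw [payoff_eq_col, Fv, hj₀]
    rw [Finset.sum_eq_single j₀]
    · simp
    · intro j _ hj; simp [Pi.single_eq_of_ne hj]
    · simp
  · rintro u ⟨y, hy, rfl⟩
    rw [payoff_eq_col]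
    calc Fv Z x = Fv Z x * ∑ j, y j := by rw [hy.2, mul_one]
    _ = ∑ j, Fv Z x * y j := by rw [Finset.mul_sum]
    _ ≤ ∑ j, (∑ i, x i * Z i j) * y j := by
        refine Finset.sum_le_sum fun j _ => ?_
        exact mul_le_mul_of_nonneg_right (Finset.inf'_le _ (mem_univ j)) (hy.1 j)

lemma isGreatest_payoff [Nonempty (Fin l)] {y : Fin m → ℝ} (hy : y ∈ stdSimplex ℝ (Fin m)) :
    IsGreatest {u : ℝ | ∃ x ∈ stdSimplex ℝ (Fin l), u = matPayoff Z x y} (Gv Z y) := by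
  constructor
  · obtain ⟨i₀, -, hi₀⟩ := Finset.exists_mem_eq_sup' (univ_nonempty (α := Fin l))
      (fun i => ∑ j, Z i j * y j)
    refine ⟨Pi.single i₀ 1, single_mem_stdSimplex ℝ i₀, ?_⟩
    rw [payoff_eq_row, Gv, hi₀]
    rw [Finset.sum_eq_single i₀]
    · simp
    · intro i _ hi; simp [Pi.single_eq_of_ne hi]
    · simp
  · rintro u ⟨x, hx, rfl⟩
    rw [payoff_eq_row]
    calc ∑ i, x i * (∑ j, Z i j * y j) ≤ ∑ i, x i * Gv Z y := by
          refine Finset.sum_le_sum fun i _ => ?_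
          exact mul_le_mul_of_nonneg_left
            (Finset.le_sup' (fun i => ∑ j, Z i j * y j) (mem_univ i)) (hx.1 i)
    _ = Gv Z y := by rw [← Finset.sum_mul, hx.2, one_mul]

/-- the continuous linear functional expansion on `Fin l → ℝ` -/
lemma clm_apply (f : (Fin l → ℝ) →L[ℝ] ℝ) (w : Fin l → ℝ) :
    f w = ∑ i, w i * f (Pi.single i 1) := by
  have hs : ∀ i : Fin l, (fun j => if i = j then (1 : ℝ) else 0) = Pi.single i 1 := by
    intro i; funext j; simp [Pi.single_apply, eq_comm]
  conv_lhs => rw [pi_eq_sum_univ w]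
  rw [map_sum]
  refine Finset.sum_congr rfl fun i _ => ?_
  rw [hs i, map_smul, smul_eq_mul]

/-- Theorem of the alternative for matrix games. -/
lemma alternative [Nonempty (Fin l)] [Nonempty (Fin m)] :
    (∃ y ∈ stdSimplex ℝ (Fin m), ∀ i, ∑ j, Z i j * y j ≤ 0) ∨
    (∃ x ∈ stdSimplex ℝ (Fin l), ∀ j, 0 < ∑ i, x i * Z i j) := by
  by_cases h : ∃ y ∈ stdSimplex ℝ (Fin m), ∀ i, ∑ j, Z i j * y j ≤ 0
  · exact Or.inl h
  right
  set D : Set (Fin l → ℝ) := Z.mulVecLin '' stdSimplex ℝ (Fin m) with hD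
  have hmul : ∀ y : Fin m → ℝ, ∀ i, Z.mulVecLin y i = ∑ j, Z i j * y j := by
    intro y i
    simp [Matrix.mulVecLin, Matrix.mulVec, dotProduct]
  have hDconv : Convex ℝ D := (convex_stdSimplex ℝ _).linear_image Z.mulVecLin
  have hDcomp : IsCompact D :=
    (isCompact_stdSimplex ℝ _).image Z.mulVecLin.continuous_of_finiteDimensional
  set K : Set (Fin l → ℝ) := {u | ∀ i, u i ≤ 0} with hK
  have hKconv : Convex ℝ K := by
    intro u hu v hv a b ha hb hab i
    have : a * u i + b * v i ≤ 0 :=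
      add_nonpos (mul_nonpos_of_nonneg_of_nonpos ha (hu i))
        (mul_nonpos_of_nonneg_of_nonpos hb (hv i))
    simpa using this
  have hKcl : IsClosed K := by
    have : K = ⋂ i, (fun u : Fin l → ℝ => u i) ⁻¹' Set.Iic 0 := by
      ext u; simp [hK, Set.mem_iInter]
    rw [this]
    exact isClosed_iInter fun i => isClosed_Iic.preimage (continuous_apply i)
  have hdisj : Disjoint D K := by
    rw [Set.disjoint_left]
    rintro d ⟨y, hy, rfl⟩ hdK
    exact h ⟨y, hy, fun i => by rw [← hmul]; exact hdK i⟩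
  obtain ⟨f, u, v, hfD, huv, hfK⟩ :=
    geometric_hahn_banach_compact_closed hDconv hDcomp hKconv hKcl hdisj
  have h0K : (0 : Fin l → ℝ) ∈ K := fun i => le_refl 0
  have hv0 : v < 0 := by have := hfK 0 h0K; rwa [map_zero] at this
  set a : Fin l → ℝ := fun i => -f (Pi.single i 1) with ha
  have hanneg : ∀ i, 0 ≤ a i := by
    intro i
    by_contra hai
    push_neg at hai
    have hfs : 0 < f (Pi.single i 1) := by simpa [ha, neg_neg] using neg_pos.mpr hai
    set c : ℝ := (v - 1) / f (Pi.single i 1) with hc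
    have hcneg : c ≤ 0 := div_nonpos_of_nonpos_of_nonneg (by linarith) hfs.le
    set p : Fin l → ℝ := Pi.single i 1 with hp
    have hbK : c • p ∈ K := by
      intro i'
      simp only [Pi.smul_apply, smul_eq_mul]
      refine mul_nonpos_of_nonpos_of_nonneg hcneg ?_
      rcases eq_or_ne i' i with rfl | hne
      · simp [hp]
      · simp [hp, Pi.single_eq_of_ne hne]
    have := hfK _ hbK
    rw [map_smul, smul_eq_mul, hc, div_mul_cancel₀ _ hfs.ne'] at this
    linarith
  have hcol : ∀ j, 0 < ∑ i, a i * Z i j := by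
    intro j
    have hmem : Z.mulVecLin (Pi.single j 1) ∈ D :=
      ⟨Pi.single j 1, single_mem_stdSimplex ℝ j, rfl⟩
    have hlt : f (Z.mulVecLin (Pi.single j 1)) < u := hfD _ hmem
    have hexp : f (Z.mulVecLin (Pi.single j 1)) = -∑ i, a i * Z i j := by
      rw [clm_apply]
      rw [← Finset.sum_neg_distrib]
      refine Finset.sum_congr rfl fun i _ => ?_
      have : Z.mulVecLin (Pi.single j 1) i = Z i j := by
        rw [hmul]
        rw [Finset.sum_eq_single j]
        · simp
        · intro j' _ hj'; simp [Pi.single_eq_of_ne hj']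
        · simp
      rw [this, ha]
      ring
    rw [hexp] at hlt
    linarith
  have hsum : 0 < ∑ i, a i := by
    rcases (Finset.sum_nonneg fun i _ => hanneg i).lt_or_eq with hlt | heq
    · exact hlt
    have hzero : ∀ i ∈ univ, a i = 0 :=
      (Finset.sum_eq_zero_iff_of_nonneg fun i _ => hanneg i).mp heq.symm
    obtain ⟨j⟩ := (inferInstance : Nonempty (Fin m))
    have := hcol j
    rw [Finset.sum_eq_zero (fun i hi => by rw [hzero i hi, zero_mul])] at this
    exact absurd this (lt_irrefl 0)
  refine ⟨fun i => a i / ∑ i', a i', ⟨fun i => div_nonneg (hanneg i) hsum.le, ?_⟩, ?_⟩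
  · rw [← Finset.sum_div, div_self hsum.ne']
  · intro j
    have : ∑ i, a i / (∑ i', a i') * Z i j = (∑ i, a i * Z i j) / ∑ i', a i' := by
      rw [Finset.sum_div]
      exact Finset.sum_congr rfl fun i _ => by ring
    rw [this]
    exact div_pos (hcol j) hsum

end MatGameAux

open MatGameAux

/-- Every matrix game is determined: `sup_x inf_y xᵀZy = inf_y sup_x xᵀZy`, and moreover
all four extrema are attained, so `max_x min_y xᵀZy = min_y max_x xᵀZy`. -/
theorem matrix_game_determined (l m : ℕ) (hl : 1 ≤ l) (hm : 1 ≤ m)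
    (Z : Matrix (Fin l) (Fin m) ℝ) :
    sSup ((fun x => sInf ((fun y => matPayoff Z x y) '' stdSimplex ℝ (Fin m))) ''
        stdSimplex ℝ (Fin l)) =
      sInf ((fun y => sSup ((fun x => matPayoff Z x y) '' stdSimplex ℝ (Fin l))) ''
        stdSimplex ℝ (Fin m)) ∧
    ∃ v : ℝ,
      IsGreatest {w : ℝ | ∃ x ∈ stdSimplex ℝ (Fin l),
        IsLeast {u : ℝ | ∃ y ∈ stdSimplex ℝ (Fin m), u = matPayoff Z x y} w} v ∧
      IsLeast {w : ℝ | ∃ y ∈ stdSimplex ℝ (Fin m),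
        IsGreatest {u : ℝ | ∃ x ∈ stdSimplex ℝ (Fin l), u = matPayoff Z x y} w} v := by
  have instl : Nonempty (Fin l) := ⟨⟨0, hl⟩⟩
  have instm : Nonempty (Fin m) := ⟨⟨0, hm⟩⟩
  -- continuity of the value functions
  have hFcont : Continuous (Fv Z) :=
    Continuous.finset_inf'_apply univ_nonempty fun j _ =>
      continuous_finset_sum _ fun i _ => (continuous_apply i).mul continuous_const
  have hGcont : Continuous (Gv Z) :=
    Continuous.finset_sup'_apply univ_nonempty fun i _ =>
      continuous_finset_sum _ fun j _ => continuous_const.mul (continuous_apply j)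
  -- attainment by compactness
  have hΔlne : (stdSimplex ℝ (Fin l)).Nonempty :=
    ⟨Pi.single (Classical.arbitrary _) 1, single_mem_stdSimplex ℝ _⟩
  have hΔmne : (stdSimplex ℝ (Fin m)).Nonempty :=
    ⟨Pi.single (Classical.arbitrary _) 1, single_mem_stdSimplex ℝ _⟩
  obtain ⟨x₀, hx₀, hx₀max⟩ :=
    (isCompact_stdSimplex ℝ (Fin l)).exists_isMaxOn hΔlne hFcont.continuousOn
  obtain ⟨y₀, hy₀, hy₀min⟩ :=
    (isCompact_stdSimplex ℝ (Fin m)).exists_isMinOn hΔmne hGcont.continuousOn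
  -- weak duality
  have hweak : ∀ x ∈ stdSimplex ℝ (Fin l), ∀ y ∈ stdSimplex ℝ (Fin m), Fv Z x ≤ Gv Z y := by
    intro x hx y hy
    calc Fv Z x ≤ matPayoff Z x y := (isLeast_payoff Z hx).2 ⟨y, hy, rfl⟩
    _ ≤ Gv Z y := (isGreatest_payoff Z hy).2 ⟨x, hx, rfl⟩
  -- strong duality via the theorem of the alternative
  have hstrong : Gv Z y₀ ≤ Fv Z x₀ := by
    by_contra hcon
    push_neg at hcon
    set t : ℝ := (Fv Z x₀ + Gv Z y₀) / 2 with ht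
    have ht1 : Fv Z x₀ < t := by rw [ht]; linarith
    have ht2 : t < Gv Z y₀ := by rw [ht]; linarith
    set Z' : Matrix (Fin l) (Fin m) ℝ := Matrix.of fun i j => Z i j - t with hZ'
    rcases alternative Z' with ⟨y, hy, hle⟩ | ⟨x, hx, hgt⟩
    · have hGy : Gv Z y ≤ t := by
        refine Finset.sup'_le _ _ fun i _ => ?_
        have := hle i
        have hrw : ∑ j, Z' i j * y j = (∑ j, Z i j * y j) - t := by
          calc ∑ j, Z' i j * y j = ∑ j, (Z i j * y j - t * y j) := by
                refine Finset.sum_congr rfl fun j _ => ?_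
                simp only [hZ', Matrix.of_apply]; ring
          _ = (∑ j, Z i j * y j) - t * ∑ j, y j := by
                rw [Finset.sum_sub_distrib, Finset.mul_sum]
          _ = (∑ j, Z i j * y j) - t := by rw [hy.2, mul_one]
        rw [hrw] at this
        linarith
      have h2 : Gv Z y₀ ≤ Gv Z y := hy₀min hy
      exact absurd (lt_of_le_of_lt (le_trans h2 hGy) ht2) (lt_irrefl _)
    · have hFx : t < Fv Z x := by
        rw [Fv, Finset.lt_inf'_iff]
        intro j _
        have := hgt j
        have hrw : ∑ i, x i * Z' i j = (∑ i, x i * Z i j) - t := by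
          calc ∑ i, x i * Z' i j = ∑ i, (x i * Z i j - t * x i) := by
                refine Finset.sum_congr rfl fun i _ => ?_
                simp only [hZ', Matrix.of_apply]; ring
          _ = (∑ i, x i * Z i j) - t * ∑ i, x i := by
                rw [Finset.sum_sub_distrib, Finset.mul_sum]
          _ = (∑ i, x i * Z i j) - t := by rw [hx.2, mul_one]
        rw [hrw] at this
        linarith
      have h2 : Fv Z x ≤ Fv Z x₀ := hx₀max hx
      exact absurd (lt_of_lt_of_le (lt_trans ht1 hFx) h2) (lt_irrefl _)
  have heq : Fv Z x₀ = Gv Z y₀ := le_antisymm (hweak x₀ hx₀ y₀ hy₀) hstrong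
  set v : ℝ := Fv Z x₀ with hv
  -- the inner image sets coincide with the sets in the statement
  have himg1 : ∀ x : Fin l → ℝ, (fun y => matPayoff Z x y) '' stdSimplex ℝ (Fin m) =
      {u : ℝ | ∃ y ∈ stdSimplex ℝ (Fin m), u = matPayoff Z x y} := by
    intro x; ext u; simp [eq_comm]
  have himg2 : ∀ y : Fin m → ℝ, (fun x => matPayoff Z x y) '' stdSimplex ℝ (Fin l) =
      {u : ℝ | ∃ x ∈ stdSimplex ℝ (Fin l), u = matPayoff Z x y} := by
    intro y; ext u; simp [eq_comm]
  constructor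
  · -- sSup / sInf equality
    have h1 : (fun x => sInf ((fun y => matPayoff Z x y) '' stdSimplex ℝ (Fin m))) ''
        stdSimplex ℝ (Fin l) = Fv Z '' stdSimplex ℝ (Fin l) := by
      refine Set.image_congr fun x hx => ?_
      rw [himg1 x]
      exact (isLeast_payoff Z hx).csInf_eq
    have h2 : (fun y => sSup ((fun x => matPayoff Z x y) '' stdSimplex ℝ (Fin l))) ''
        stdSimplex ℝ (Fin m) = Gv Z '' stdSimplex ℝ (Fin m) := by
      refine Set.image_congr fun y hy => ?_
      rw [himg2 y]
      exact (isGreatest_payoff Z hy).csSup_eq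
    rw [h1, h2]
    have hsup : IsGreatest (Fv Z '' stdSimplex ℝ (Fin l)) v := by
      constructor
      · exact ⟨x₀, hx₀, rfl⟩
      · rintro w ⟨x, hx, rfl⟩
        exact hx₀max hx
    have hinf : IsLeast (Gv Z '' stdSimplex ℝ (Fin m)) v := by
      constructor
      · exact ⟨y₀, hy₀, heq.symm⟩
      · rintro w ⟨y, hy, rfl⟩
        calc v = Gv Z y₀ := heq
        _ ≤ Gv Z y := hy₀min hy
    rw [hsup.csSup_eq, hinf.csInf_eq]
  · refine ⟨v, ⟨⟨x₀, hx₀, isLeast_payoff Z hx₀⟩, ?_⟩,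
      ⟨⟨y₀, hy₀, by rw [heq]; exact isGreatest_payoff Z hy₀⟩, ?_⟩⟩
    · rintro w ⟨x, hx, hw⟩
      have hwF : w = Fv Z x := hw.unique (isLeast_payoff Z hx)
      calc w = Fv Z x := hwF
      _ ≤ Fv Z x₀ := hx₀max hx
    · rintro w ⟨y, hy, hw⟩
      have hwG : w = Gv Z y := hw.unique (isGreatest_payoff Z hy)
      calc v = Gv Z y₀ := heq
      _ ≤ Gv Z y := hy₀min hy
      _ = w := hwG.symm
end

section
/- The value of a matrix game Z ∈ ℝ^{l×m} is the optimal value of the dual linear program 'minimise v subject to Σ_{j=1}^m z_{ij} y_j ≤ v for all 1 ≤ i ≤ l, y_j ≥ 0 for all 1 ≤ j ≤ m, and Σ_{j=1}^m y_j = 1': that is, val(Z) = min_{y∈Δ_m} max_{1≤i≤l} Σ_{j=1}^m z_{ij} y_j, and any y* ∈ Δ_m attaining this minimum is an optimal strategy for player 2, i.e., xᵀZy* ≤ val(Z) for all x ∈ Δ_l. -/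
open Finset

/-- The value of the matrix game `Z`: `val(Z) = max_{x ∈ Δ_l} min_{y ∈ Δ_m} xᵀZy`
(the extrema are attained, so the supremum/infimum agree with the maximum/minimum). -/
noncomputable def matVal {l m : ℕ} (Z : Matrix (Fin l) (Fin m) ℝ) : ℝ :=
  sSup ((fun x => sInf ((fun y => matPayoff Z x y) '' stdSimplex ℝ (Fin m))) ''
    stdSimplex ℝ (Fin l))

/-- Auxiliary: the best-response value for player 1 against strategy `y` of player 2. -/
noncomputable def colMax {l m : ℕ} (hl : 1 ≤ l) (Z : Matrix (Fin l) (Fin m) ℝ)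
    (y : Fin m → ℝ) : ℝ :=
  Finset.univ.sup' ⟨⟨0, hl⟩, Finset.mem_univ _⟩ (fun i => ∑ j, Z i j * y j)

lemma colMax_continuous {l m : ℕ} (hl : 1 ≤ l) (Z : Matrix (Fin l) (Fin m) ℝ) :
    Continuous (colMax hl Z) := by
  apply Continuous.finset_sup'_apply ⟨⟨0, hl⟩, Finset.mem_univ _⟩
  intro i _
  exact continuous_finset_sum _ fun j _ => continuous_const.mul (continuous_apply j)

lemma matPayoff_eq {l m : ℕ} (Z : Matrix (Fin l) (Fin m) ℝ) (x : Fin l → ℝ) (y : Fin m → ℝ) :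
    matPayoff Z x y = ∑ i, x i * ∑ j, Z i j * y j := by
  simp [matPayoff, Finset.mul_sum, mul_assoc]

lemma matPayoff_le_colMax {l m : ℕ} (hl : 1 ≤ l) (Z : Matrix (Fin l) (Fin m) ℝ)
    {x : Fin l → ℝ} (hx : x ∈ stdSimplex ℝ (Fin l)) (y : Fin m → ℝ) :
    matPayoff Z x y ≤ colMax hl Z y := by
  rw [matPayoff_eq]
  unfold colMax
  calc ∑ i, x i * ∑ j, Z i j * y j ≤ ∑ i, x i * colMax hl Z y := by
        refine Finset.sum_le_sum fun i _ => ?_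
        have hle : (fun i => ∑ j, Z i j * y j) i ≤ colMax hl Z y :=
          Finset.le_sup' (fun i => ∑ j, Z i j * y j) (Finset.mem_univ i)
        exact mul_le_mul_of_nonneg_left hle (hx.1 i)
    _ = colMax hl Z y := by rw [← Finset.sum_mul, hx.2, one_mul]

lemma matPayoff_continuous {l m : ℕ} (Z : Matrix (Fin l) (Fin m) ℝ) (x : Fin l → ℝ) :
    Continuous fun y => matPayoff Z x y := by
  refine continuous_finset_sum _ fun i _ => continuous_finset_sum _ fun j _ => ?_
  exact continuous_const.mul (continuous_apply j)

/-- The value of a matrix game is the optimal value of the dual LP: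
`val(Z) = min_{y ∈ Δ_m} max_i ∑_j z_{ij} y_j` (the minimum being attained), and any `y⋆`
attaining this minimum is an optimal strategy for player 2. -/
theorem matrix_game_dual_LP (l m : ℕ) (hl : 1 ≤ l) (hm : 1 ≤ m)
    (Z : Matrix (Fin l) (Fin m) ℝ) :
    IsLeast {w : ℝ | ∃ y ∈ stdSimplex ℝ (Fin m),
        w = Finset.univ.sup' ⟨⟨0, hl⟩, Finset.mem_univ _⟩ (fun i => ∑ j, Z i j * y j)}
      (matVal Z) ∧
    ∀ y ∈ stdSimplex ℝ (Fin m),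
      Finset.univ.sup' ⟨⟨0, hl⟩, Finset.mem_univ _⟩ (fun i => ∑ j, Z i j * y j) = matVal Z →
      ∀ x ∈ stdSimplex ℝ (Fin l), matPayoff Z x y ≤ matVal Z := by
  classical
  have hne : (Finset.univ : Finset (Fin l)).Nonempty := ⟨⟨0, hl⟩, Finset.mem_univ _⟩
  have hsm : (stdSimplex ℝ (Fin m)).Nonempty :=
    ⟨Pi.single ⟨0, hm⟩ 1, single_mem_stdSimplex (𝕜 := ℝ) (⟨0, hm⟩ : Fin m)⟩
  have hsl : (stdSimplex ℝ (Fin l)).Nonempty :=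
    ⟨Pi.single ⟨0, hl⟩ 1, single_mem_stdSimplex (𝕜 := ℝ) (⟨0, hl⟩ : Fin l)⟩
  -- minimizer of colMax
  obtain ⟨y₀, hy₀, hy₀min⟩ :=
    (isCompact_stdSimplex ℝ (Fin m)).exists_isMinOn hsm (colMax_continuous hl Z).continuousOn
  set v : ℝ := colMax hl Z y₀ with hvdef
  -- hard direction via separation
  have key : ∃ x ∈ stdSimplex ℝ (Fin l), ∀ y ∈ stdSimplex ℝ (Fin m), v ≤ matPayoff Z x y := by
    set s : Set (Fin l → ℝ) := Set.pi Set.univ fun _ => Set.Iio v with hsdef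
    have hsmem : ∀ b : Fin l → ℝ, (∀ j, b j < v) → b ∈ s :=
      fun b hb => Set.mem_pi.mpr fun j _ => Set.mem_Iio.mpr (hb j)
    set t : Set (Fin l → ℝ) := (Matrix.mulVecLin Z) '' stdSimplex ℝ (Fin m) with htdef
    have hsconv : Convex ℝ s := convex_pi fun _ _ => convex_Iio v
    have hsopen : IsOpen s := isOpen_set_pi Set.finite_univ fun _ _ => isOpen_Iio
    have htconv : Convex ℝ t := (convex_stdSimplex ℝ _).linear_image _
    have hdisj : Disjoint s t := by
      rw [Set.disjoint_left]
      rintro b hb ⟨y, hy, rfl⟩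
      have h1 : colMax hl Z y < v := by
        refine (Finset.sup'_lt_iff ⟨⟨0, hl⟩, Finset.mem_univ _⟩).mpr fun i _ => ?_
        have h2 := Set.mem_pi.mp hb i (Set.mem_univ i)
        rw [Set.mem_Iio] at h2
        simpa [Matrix.mulVecLin_apply, Matrix.mulVec, dotProduct] using h2
      exact absurd (hy₀min hy) (not_le.mpr h1)
    obtain ⟨f, u, hfs, hft⟩ := geometric_hahn_banach_open hsconv hsopen htconv hdisj
    -- coordinates of f
    have hsingle : ∀ (i : Fin l) (c : ℝ), f (Pi.single i c) = c * f (Pi.single i 1) := by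
      intro i c
      have h2 : Pi.single i c = c • (Pi.single i (1 : ℝ) : Fin l → ℝ) := by
        funext j
        by_cases h : j = i <;> simp [Pi.single_apply, h]
      rw [h2, map_smul, smul_eq_mul]
    have hflin : ∀ b : Fin l → ℝ, f b = ∑ i, b i * f (Pi.single i 1) := by
      intro b
      conv_lhs => rw [← Finset.univ_sum_single b]
      rw [map_sum]
      exact Finset.sum_congr rfl fun i _ => hsingle i (b i)
    -- nonnegativity of coordinates
    have hxnn : ∀ i, 0 ≤ f (Pi.single i 1) := by
      intro i
      by_contra h
      push_neg at h
      have hneg : (0 : ℝ) < -(f (Pi.single i 1)) := by linarith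
      set c : ℝ := max 0 ((u - f (fun _ => v - 1)) / (-(f (Pi.single i 1)))) with hcdef
      have hc0 : 0 ≤ c := le_max_left _ _
      have hbmem : ((fun _ => v - 1) - c • (Pi.single i (1 : ℝ) : Fin l → ℝ)) ∈ s := by
        refine hsmem _ fun j => ?_
        have hbj : ((fun _ => v - 1 : Fin l → ℝ) - c • (Pi.single i (1 : ℝ) : Fin l → ℝ)) j
            = (v - 1) - c * (Pi.single i (1 : ℝ) : Fin l → ℝ) j := rfl
        rw [hbj]
        by_cases hji : j = i
        · subst hji
          rw [Pi.single_eq_same]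
          linarith
        · rw [Pi.single_eq_of_ne hji]
          linarith
      have hlt := hfs _ hbmem
      rw [map_sub, map_smul, smul_eq_mul] at hlt
      have hcge : (u - f (fun _ => v - 1)) / (-(f (Pi.single i 1))) ≤ c := le_max_right _ _
      rw [div_le_iff₀ hneg] at hcge
      have hflip : c * -(f (Pi.single i 1)) = -(c * f (Pi.single i 1)) := by ring
      rw [hflip] at hcge
      linarith
    set S : ℝ := ∑ i, f (Pi.single i 1) with hSdef
    have hS0 : 0 ≤ S := Finset.sum_nonneg fun i _ => hxnn i
    have hSpos : 0 < S := by
      rcases lt_or_eq_of_le hS0 with hlt | heq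
      · exact hlt
      · exfalso
        have hall : ∀ i, f (Pi.single i 1) = 0 := by
          intro i
          have h1 := Finset.single_le_sum (f := fun i : Fin l => f (Pi.single i 1))
            (fun j _ => hxnn j) (Finset.mem_univ i)
          have h2 : S = 0 := heq.symm
          exact le_antisymm (by rw [hSdef] at h2; linarith) (hxnn i)
        have hf0 : ∀ b, f b = 0 := by
          intro b
          rw [hflin]
          exact Finset.sum_eq_zero fun i _ => by rw [hall i, mul_zero]
        have ha : (fun _ : Fin l => v - 1) ∈ s := hsmem _ fun j => by linarith
        have h1 := hfs _ ha
        have h2 := hft _ ⟨y₀, hy₀, rfl⟩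
        rw [hf0] at h1
        rw [hf0] at h2
        linarith
    -- v * S ≤ u
    have hvS : v * S ≤ u := by
      refine le_of_forall_pos_le_add fun ε hε => ?_
      have hεS : 0 < ε / S := div_pos hε hSpos
      have ha : (fun _ : Fin l => v - ε / S) ∈ s := hsmem _ fun j => by linarith
      have h1 := hfs _ ha
      rw [hflin] at h1
      have h2 : ∑ i, (v - ε / S) * f (Pi.single i 1) = (v - ε / S) * S := by
        rw [hSdef, Finset.mul_sum]
      rw [h2] at h1
      have h3 : (v - ε / S) * S = v * S - ε := by
        field_simp
      linarith
    -- the optimal strategy for player 1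
    refine ⟨fun i => S⁻¹ * f (Pi.single i 1),
      ⟨fun i => mul_nonneg (inv_nonneg.2 hS0) (hxnn i), ?_⟩, ?_⟩
    · rw [← Finset.mul_sum, ← hSdef, inv_mul_cancel₀ (ne_of_gt hSpos)]
    · intro y hy
      have h1 : u ≤ f (Matrix.mulVecLin Z y) := hft _ ⟨y, hy, rfl⟩
      rw [hflin] at h1
      rw [matPayoff_eq]
      have h2 : ∑ i, (S⁻¹ * f (Pi.single i 1)) * ∑ j, Z i j * y j
          = S⁻¹ * ∑ i, (Matrix.mulVecLin Z y) i * f (Pi.single i 1) := by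
        rw [Finset.mul_sum]
        refine Finset.sum_congr rfl fun i _ => ?_
        simp only [Matrix.mulVecLin_apply, Matrix.mulVec, dotProduct]
        ring
      rw [h2]
      calc v = S⁻¹ * (v * S) := by field_simp
        _ ≤ S⁻¹ * u := mul_le_mul_of_nonneg_left hvS (inv_nonneg.2 hS0)
        _ ≤ S⁻¹ * ∑ i, (Matrix.mulVecLin Z y) i * f (Pi.single i 1) :=
            mul_le_mul_of_nonneg_left h1 (inv_nonneg.2 hS0)
  obtain ⟨xs, hxs, hxslow⟩ := key
  -- properties of the inner infimum
  have hPne : ∀ x : Fin l → ℝ, ((fun y => matPayoff Z x y) '' stdSimplex ℝ (Fin m)).Nonempty :=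
    fun x => hsm.image _
  have hPbdd : ∀ x : Fin l → ℝ, BddBelow ((fun y => matPayoff Z x y) '' stdSimplex ℝ (Fin m)) :=
    fun x => ((isCompact_stdSimplex ℝ (Fin m)).image (matPayoff_continuous Z x)).bddBelow
  have hInf_le_v : ∀ x ∈ stdSimplex ℝ (Fin l),
      sInf ((fun y => matPayoff Z x y) '' stdSimplex ℝ (Fin m)) ≤ v := by
    intro x hx
    exact (csInf_le (hPbdd x) ⟨y₀, hy₀, rfl⟩).trans (matPayoff_le_colMax hl Z hx y₀)
  -- matVal = v
  have hval : matVal Z = v := by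
    have hub : matVal Z ≤ v := by
      refine csSup_le (hsl.image _) ?_
      rintro w ⟨x, hx, rfl⟩
      exact hInf_le_v x hx
    have hlb : v ≤ matVal Z := by
      have h1 : v ≤ sInf ((fun y => matPayoff Z xs y) '' stdSimplex ℝ (Fin m)) := by
        refine le_csInf (hPne xs) ?_
        rintro w ⟨y, hy, rfl⟩
        exact hxslow y hy
      refine h1.trans (le_csSup ?_ ⟨xs, hxs, rfl⟩)
      exact ⟨v, by rintro w ⟨x, hx, rfl⟩; exact hInf_le_v x hx⟩
    linarith
  refine ⟨⟨⟨y₀, hy₀, by rw [hval]; rfl⟩, ?_⟩, ?_⟩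
  · rintro w ⟨y, hy, rfl⟩
    rw [hval]
    exact hy₀min hy
  · intro y hy hsup x hx
    calc matPayoff Z x y ≤ colMax hl Z y := matPayoff_le_colMax hl Z hx y
      _ = matVal Z := hsup
end
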